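/- Let U : ℝ → ℝ be continuous and let R : ℝ → ℂ be twice differentiable with R″(t) = U(t)·R(t) for all t ∈ ℝ. Suppose κ ∈ ℝ, k > 0, c₁, c₂ ∈ ℂ and: R(t) − c₁·exp(−iκt) → 0 and R′(t) + iκ·c₁·exp(−iκt) → 0 as t → −∞, while R(t) − c₂·exp(ikt) → 0 and R′(t) − ik·c₂·exp(ikt) → 0 as t → +∞. Then k·|c₂|² + κ·|c₁|² = 0; in particular, if κ > 0 then c₁ = 0 and c₂ = 0, so no nontrivial quasinormal mode with these real-frequency asymptotics exists. -/

import Mathlib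

open Complex Filter

private lemma prod_tendsto {f g F G : ℝ → ℂ} {l : Filter ℝ} {C : ℝ} {L : ℂ}
    (hf : Tendsto (fun t => f t - F t) l (nhds 0))
    (hg : Tendsto (fun t => g t - G t) l (nhds 0))
    (hF : ∀ t, ‖F t‖ ≤ C) (hG : ∀ t, ‖G t‖ ≤ C)
    (hFG : ∀ t, F t * G t = L) :
    Tendsto (fun t => f t * g t) l (nhds L) := by
  have hGb : IsBoundedUnder (· ≤ ·) l ((‖·‖) ∘ G) := isBoundedUnder_of ⟨C, fun t => hG t⟩
  have hFb : IsBoundedUnder (· ≤ ·) l ((‖·‖) ∘ F) := isBoundedUnder_of ⟨C, fun t => hF t⟩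
  have A : Tendsto (fun t => (f t - F t) * (g t - G t)) l (nhds 0) := by
    simpa using hf.mul hg
  have B : Tendsto (fun t => (f t - F t) * G t) l (nhds 0) :=
    hf.zero_mul_isBoundedUnder_le hGb
  have Cc : Tendsto (fun t => F t * (g t - G t)) l (nhds 0) :=
    Filter.isBoundedUnder_le_mul_tendsto_zero hFb hg
  have h0 : Tendsto (fun t => (f t - F t) * (g t - G t) + ((f t - F t) * G t
      + F t * (g t - G t)) + L) l (nhds L) := by
    simpa using (A.add (B.add Cc)).add (tendsto_const_nhds (x := L) (f := l))
  exact h0.congr fun t => by rw [← hFG t]; ring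

/-- For a solution `R : ℝ → ℂ` of `R″ = U·R` (with `U : ℝ → ℝ` continuous) which is
purely ingoing at the horizon, `R(t) ≈ c₁·exp(−iκt)` as `t → −∞`, and purely outgoing
at infinity, `R(t) ≈ c₂·exp(ikt)` as `t → +∞` with `k > 0`, one has
`k·|c₂|² + κ·|c₁|² = 0`; in particular if `κ > 0` then `c₁ = 0` and `c₂ = 0`, so no
nontrivial quasinormal mode with these real-frequency asymptotics exists. -/
theorem stmt_12 (U : ℝ → ℝ) (R R' : ℝ → ℂ) (κ k : ℝ) (c₁ c₂ : ℂ)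
    (hU : Continuous U)
    (hR : ∀ t : ℝ, HasDerivAt R (R' t) t)
    (hR' : ∀ t : ℝ, HasDerivAt R' ((U t : ℂ) * R t) t)
    (hk : 0 < k)
    (h₁ : Tendsto (fun t : ℝ => R t - c₁ * Complex.exp (-(Complex.I * (κ : ℂ) * (t : ℂ))))
      atBot (nhds 0))
    (h₁' : Tendsto (fun t : ℝ =>
        R' t + Complex.I * (κ : ℂ) * c₁ * Complex.exp (-(Complex.I * (κ : ℂ) * (t : ℂ))))
      atBot (nhds 0))
    (h₂ : Tendsto (fun t : ℝ => R t - c₂ * Complex.exp (Complex.I * (k : ℂ) * (t : ℂ)))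
      atTop (nhds 0))
    (h₂' : Tendsto (fun t : ℝ =>
        R' t - Complex.I * (k : ℂ) * c₂ * Complex.exp (Complex.I * (k : ℂ) * (t : ℂ)))
      atTop (nhds 0)) :
    k * ‖c₂‖^2 + κ * ‖c₁‖^2 = 0 ∧ (0 < κ → c₁ = 0 ∧ c₂ = 0) := by
  -- the Wronskian-type quantity W = Im(conj R · R')
  set W : ℝ → ℝ := fun t => ((starRingEnd ℂ) (R t) * R' t).im with hWdef
  have hW : ∀ t, HasDerivAt W 0 t := by
    intro t
    have h := ((hR t).star.mul (hR' t))
    have h2 := Complex.imCLM.hasFDerivAt.comp_hasDerivAt t h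
    have h3 : Complex.imCLM (star (R' t) * R' t
        + star (R t) * ((U t : ℂ) * R t)) = 0 := by
      simp [Complex.add_im, Complex.mul_im, Complex.mul_re, Complex.conj_re, Complex.conj_im]
      ring
    rw [h3] at h2
    exact h2
  have hconst : ∀ t, W t = W 0 := by
    have hd := is_const_of_deriv_eq_zero (𝕜 := ℝ) (f := W)
      (fun t => (hW t).differentiableAt) (fun t => (hW t).deriv)
    exact fun t => hd t 0
  -- abbreviations
  set e₂ : ℝ → ℂ := fun t => Complex.exp (Complex.I * (k : ℂ) * (t : ℂ)) with he₂
  set e₁ : ℝ → ℂ := fun t => Complex.exp (-(Complex.I * (κ : ℂ) * (t : ℂ))) with he₁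
  have hnorm₂ : ∀ t, ‖e₂ t‖ = 1 := fun t => by
    simp [he₂, Complex.norm_exp, Complex.mul_re]
  have hnorm₁ : ∀ t, ‖e₁ t‖ = 1 := fun t => by
    simp [he₁, Complex.norm_exp, Complex.mul_re]
  have hce₂ : ∀ t, (starRingEnd ℂ) (e₂ t) * e₂ t = 1 := fun t => by
    rw [he₂, ← Complex.exp_conj, ← Complex.exp_add,
      show (starRingEnd ℂ) (Complex.I*(k:ℂ)*(t:ℂ)) + Complex.I*(k:ℂ)*(t:ℂ) = 0 by
        simp [map_mul, Complex.conj_ofReal, Complex.conj_I], Complex.exp_zero]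
  have hce₁ : ∀ t, (starRingEnd ℂ) (e₁ t) * e₁ t = 1 := fun t => by
    rw [he₁, ← Complex.exp_conj, ← Complex.exp_add,
      show (starRingEnd ℂ) (-(Complex.I*(κ:ℂ)*(t:ℂ))) + -(Complex.I*(κ:ℂ)*(t:ℂ)) = 0 by
        simp [map_mul, Complex.conj_ofReal, Complex.conj_I], Complex.exp_zero]
  -- limit of conj R · R' at +∞
  have hconjR₂ : Tendsto (fun t => (starRingEnd ℂ) (R t) - (starRingEnd ℂ) (c₂ * e₂ t))
      atTop (nhds 0) := by
    have := (Complex.continuous_conj.tendsto 0).comp h₂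
    simpa only [Function.comp_def, map_sub, map_zero] using this
  have hP₂ : Tendsto (fun t => (starRingEnd ℂ) (R t) * R' t) atTop
      (nhds (Complex.I * (k : ℂ) * (Complex.normSq c₂ : ℂ))) := by
    refine prod_tendsto (C := ‖c₂‖ + k * ‖c₂‖) hconjR₂ h₂' ?_ ?_ ?_
    · intro t
      have : ‖(starRingEnd ℂ) (c₂ * e₂ t)‖ = ‖c₂‖ := by
        simp [norm_mul, hnorm₂ t]
      rw [this]; nlinarith [norm_nonneg c₂, hk.le]
    · intro t
      have : ‖Complex.I * (k : ℂ) * c₂ * e₂ t‖ = k * ‖c₂‖ := by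
        simp [norm_mul, hnorm₂ t, abs_of_pos hk]
      rw [this]; nlinarith [norm_nonneg c₂]
    · intro t
      rw [map_mul,
        show (starRingEnd ℂ) c₂ * (starRingEnd ℂ) (e₂ t) * (Complex.I * (k:ℂ) * c₂ * e₂ t)
          = Complex.I * (k:ℂ) * ((starRingEnd ℂ) c₂ * c₂) * ((starRingEnd ℂ) (e₂ t) * e₂ t)
          by ring, hce₂ t, mul_comm ((starRingEnd ℂ) c₂) c₂, Complex.mul_conj, mul_one]
  -- limit of conj R · R' at −∞
  have hconjR₁ : Tendsto (fun t => (starRingEnd ℂ) (R t) - (starRingEnd ℂ) (c₁ * e₁ t))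
      atBot (nhds 0) := by
    have := (Complex.continuous_conj.tendsto 0).comp h₁
    simpa only [Function.comp_def, map_sub, map_zero] using this
  have h₁'' : Tendsto (fun t => R' t - (-(Complex.I * (κ : ℂ) * c₁ * e₁ t))) atBot (nhds 0) := by
    simpa [sub_neg_eq_add] using h₁'
  have hP₁ : Tendsto (fun t => (starRingEnd ℂ) (R t) * R' t) atBot
      (nhds (-(Complex.I * (κ : ℂ) * (Complex.normSq c₁ : ℂ)))) := by
    refine prod_tendsto (C := ‖c₁‖ + |κ| * ‖c₁‖) hconjR₁ h₁'' ?_ ?_ ?_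
    · intro t
      have : ‖(starRingEnd ℂ) (c₁ * e₁ t)‖ = ‖c₁‖ := by
        simp [norm_mul, hnorm₁ t]
      rw [this]; nlinarith [norm_nonneg c₁, abs_nonneg κ]
    · intro t
      have : ‖-(Complex.I * (κ : ℂ) * c₁ * e₁ t)‖ = |κ| * ‖c₁‖ := by
        simp [norm_mul, hnorm₁ t, Complex.norm_real]
      rw [this]; nlinarith [norm_nonneg c₁]
    · intro t
      rw [map_mul,
        show (starRingEnd ℂ) c₁ * (starRingEnd ℂ) (e₁ t) * -(Complex.I * (κ:ℂ) * c₁ * e₁ t)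
          = -(Complex.I * (κ:ℂ) * ((starRingEnd ℂ) c₁ * c₁)) * ((starRingEnd ℂ) (e₁ t) * e₁ t)
          by ring, hce₁ t, mul_comm ((starRingEnd ℂ) c₁) c₁, Complex.mul_conj, mul_one]
  -- take imaginary parts
  have hW₂ : Tendsto W atTop (nhds (k * Complex.normSq c₂)) := by
    have h := (Complex.continuous_im.tendsto _).comp hP₂
    have him : (Complex.I * (k:ℂ) * ((Complex.normSq c₂ : ℝ):ℂ)).im = k * Complex.normSq c₂ := by
      simp [Complex.mul_im, Complex.mul_re]
    rw [him] at h
    exact h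
  have hW₁ : Tendsto W atBot (nhds (-(κ * Complex.normSq c₁))) := by
    have h := (Complex.continuous_im.tendsto _).comp hP₁
    have him : (-(Complex.I * (κ:ℂ) * ((Complex.normSq c₁ : ℝ):ℂ))).im
        = -(κ * Complex.normSq c₁) := by
      simp [Complex.mul_im, Complex.mul_re]
    rw [him] at h
    exact h
  have hWc₂ : Tendsto W atTop (nhds (W 0)) :=
    tendsto_const_nhds.congr fun t => (hconst t).symm
  have hWc₁ : Tendsto W atBot (nhds (W 0)) :=
    tendsto_const_nhds.congr fun t => (hconst t).symm
  have hEq₂ : W 0 = k * Complex.normSq c₂ := tendsto_nhds_unique hWc₂ hW₂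
  have hEq₁ : W 0 = -(κ * Complex.normSq c₁) := tendsto_nhds_unique hWc₁ hW₁
  have hns₂ : Complex.normSq c₂ = ‖c₂‖ ^ 2 := by
    rw [Complex.sq_norm]
  have hns₁ : Complex.normSq c₁ = ‖c₁‖ ^ 2 := by
    rw [Complex.sq_norm]
  have hmain : k * ‖c₂‖ ^ 2 + κ * ‖c₁‖ ^ 2 = 0 := by
    rw [← hns₁, ← hns₂]; linarith [hEq₂ ▸ hEq₁]
  refine ⟨hmain, fun hκ => ?_⟩
  have h2 : ‖c₂‖ = 0 := by
    have hz : k * ‖c₂‖ ^ 2 = 0 := by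
      nlinarith [mul_nonneg hk.le (sq_nonneg ‖c₂‖), mul_nonneg hκ.le (sq_nonneg ‖c₁‖)]
    have := (mul_eq_zero.mp hz).resolve_left (ne_of_gt hk)
    exact pow_eq_zero_iff two_ne_zero |>.mp this
  have h1 : ‖c₁‖ = 0 := by
    have hz : κ * ‖c₁‖ ^ 2 = 0 := by
      nlinarith [mul_nonneg hk.le (sq_nonneg ‖c₂‖), mul_nonneg hκ.le (sq_nonneg ‖c₁‖)]
    have := (mul_eq_zero.mp hz).resolve_left (ne_of_gt hκ)
    exact pow_eq_zero_iff two_ne_zero |>.mp this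
  exact ⟨norm_eq_zero.mp h1, norm_eq_zero.mp h2⟩
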